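/- A continuous map of a planar disk that is boundary-close to a nontrivial rotation has a fixed point: let r > 0, let α ∈ (0, π), let R_α : ℝ² → ℝ² be the rotation about the origin by angle α, and let F : ℝ² → ℝ² be continuous on the closed disk {‖p‖ ≤ r}. If ‖F(p) − R_α(p)‖ < r·sin α for every p with ‖p‖ = r, then there exists x with ‖x‖ < r and F(x) = x. -/

import Mathlib

open Real

noncomputable section

/-- Rotation of the Euclidean plane about the origin by angle `a`. -/
def rot2 (a : ℝ) (p : EuclideanSpace ℝ (Fin 2)) : EuclideanSpace ℝ (Fin 2) :=
  (WithLp.equiv 2 (Fin 2 → ℝ)).symm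
    ![Real.cos a * p 0 - Real.sin a * p 1, Real.sin a * p 0 + Real.cos a * p 1]

namespace NearRotAux

open Complex Metric Set

/-- Euclidean plane to complex numbers. -/
def toC (p : EuclideanSpace ℝ (Fin 2)) : ℂ := (p 0 : ℂ) + (p 1 : ℂ) * Complex.I

/-- Complex numbers to Euclidean plane. -/
def ofC (z : ℂ) : EuclideanSpace ℝ (Fin 2) :=
  (WithLp.equiv 2 (Fin 2 → ℝ)).symm ![z.re, z.im]

lemma ofC_apply_zero (z : ℂ) : ofC z 0 = z.re := rfl
lemma ofC_apply_one (z : ℂ) : ofC z 1 = z.im := rfl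

lemma toC_re (p : EuclideanSpace ℝ (Fin 2)) : (toC p).re = p 0 := by simp [toC]
lemma toC_im (p : EuclideanSpace ℝ (Fin 2)) : (toC p).im = p 1 := by simp [toC]

lemma toC_ofC (z : ℂ) : toC (ofC z) = z := by
  apply Complex.ext <;> simp [toC_re, toC_im, ofC_apply_zero, ofC_apply_one]

lemma ofC_toC (p : EuclideanSpace ℝ (Fin 2)) : ofC (toC p) = p := by
  ext i
  fin_cases i
  · simpa [ofC_apply_zero] using toC_re p
  · simpa [ofC_apply_one] using toC_im p

lemma abs_toC (p : EuclideanSpace ℝ (Fin 2)) : ‖toC p‖ = ‖p‖ := by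
  rw [EuclideanSpace.norm_eq, Complex.norm_def, Complex.normSq_apply,
    toC_re, toC_im, Fin.sum_univ_two]
  congr 1
  simp [sq_abs, sq]

lemma toC_sub (p q : EuclideanSpace ℝ (Fin 2)) : toC (p - q) = toC p - toC q := by
  have h0 : (p - q) 0 = p 0 - q 0 := rfl
  have h1 : (p - q) 1 = p 1 - q 1 := rfl
  simp only [toC, h0, h1]
  push_cast
  ring

lemma continuous_toC : Continuous toC := by
  apply Continuous.add
  · exact Complex.continuous_ofReal.comp ((continuous_apply 0).comp (PiLp.continuous_ofLp 2 _))
  · exact (Complex.continuous_ofReal.comp ((continuous_apply 1).comp (PiLp.continuous_ofLp 2 _))).mul continuous_const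

lemma continuous_ofC : Continuous ofC := by
  apply Continuous.comp (PiLp.continuous_toLp 2 (fun _ : Fin 2 => ℝ)) ?_
  refine continuous_pi ?_
  intro i
  fin_cases i
  · exact Complex.continuous_re
  · exact Complex.continuous_im

lemma norm_ofC (z : ℂ) : ‖ofC z‖ = ‖z‖ := by
  rw [← abs_toC, toC_ofC]

lemma toC_rot2 (a : ℝ) (p : EuclideanSpace ℝ (Fin 2)) :
    toC (rot2 a p) = Complex.exp (a * Complex.I) * toC p := by
  have h0 : (rot2 a p) 0 = Real.cos a * p 0 - Real.sin a * p 1 := rfl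
  have h1 : (rot2 a p) 1 = Real.sin a * p 0 + Real.cos a * p 1 := rfl
  rw [Complex.exp_mul_I]
  simp only [toC, h0, h1, ← Complex.ofReal_cos, ← Complex.ofReal_sin]
  push_cast
  ring_nf
  rw [Complex.I_sq]
  ring

/-- A nonvanishing continuous function on a closed disk has a continuous logarithm. -/
lemma exists_log (r : ℝ) (hr : 0 ≤ r) (g : ℂ → ℂ)
    (hg : ContinuousOn g (closedBall 0 r))
    (h0 : ∀ z ∈ closedBall (0 : ℂ) r, g z ≠ 0) :
    ∃ L : ℂ → ℂ, ContinuousOn L (closedBall 0 r) ∧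
      ∀ z ∈ closedBall (0 : ℂ) r, Complex.exp (L z) = g z := by
  set K := closedBall (0 : ℂ) r with hK_def
  have hK : IsCompact K := isCompact_closedBall _ _
  have hKne : K.Nonempty := ⟨0, mem_closedBall_self hr⟩
  -- minimum of |g| on K
  obtain ⟨z₀, hz₀K, hmin₀⟩ := hK.exists_isMinOn hKne
    (continuous_norm.comp_continuousOn hg)
  set m := ‖g z₀‖ with hm_def
  have hmin : ∀ z ∈ K, m ≤ ‖g z‖ := fun z hz => hmin₀ hz
  have hm : 0 < m := by
    simpa [hm_def] using (norm_pos_iff.mpr (h0 z₀ hz₀K))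
  -- uniform continuity
  have hUC := hK.uniformContinuousOn_of_continuous hg
  rw [Metric.uniformContinuousOn_iff] at hUC
  obtain ⟨δ, hδ, hδ'⟩ := hUC m hm
  obtain ⟨N, hN⟩ := exists_nat_gt (r / δ)
  have hNpos : 0 < (N : ℝ) := lt_of_le_of_lt (div_nonneg hr hδ.le) hN
  have hrN : r / N < δ := by
    rw [div_lt_iff₀ hNpos]
    rw [div_lt_iff₀ hδ] at hN
    linarith [hN]
  -- membership of scaled points
  have hmem : ∀ (k : ℕ), (k : ℝ) ≤ N → ∀ z ∈ K, ((k : ℂ) / N) * z ∈ K := by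
    intro k hk z hz
    rw [hK_def, mem_closedBall_zero_iff] at hz ⊢
    have h1 : ‖(k : ℂ) / N‖ ≤ 1 := by
      rw [norm_div]
      simp only [Complex.norm_natCast]
      rw [div_le_one hNpos]
      exact hk
    calc ‖((k : ℂ) / N) * z‖ = ‖(k : ℂ) / N‖ * ‖z‖ := by
          rw [norm_mul]
      _ ≤ 1 * r := by
          apply mul_le_mul h1 hz (norm_nonneg _) zero_le_one
      _ = r := one_mul r
  -- main induction
  have main : ∀ k : ℕ, (k : ℝ) ≤ N →
      ∃ L : ℂ → ℂ, ContinuousOn L K ∧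
        ∀ z ∈ K, Complex.exp (L z) = g (((k : ℂ) / N) * z) := by
    intro k
    induction k with
    | zero =>
      intro _
      have h0' : g 0 ≠ 0 := h0 0 (mem_closedBall_self hr)
      have : g 0 ∈ Set.range Complex.exp := by
        rw [Complex.range_exp]; exact h0'
      obtain ⟨w, hw⟩ := this
      exact ⟨fun _ => w, continuousOn_const, fun z _ => by simpa using hw⟩
    | succ k ih =>
      intro hk1
      have hkN : (k : ℝ) ≤ N := by push_cast at hk1 ⊢; linarith
      obtain ⟨L, hLc, hLe⟩ := ih hkN
      -- the quotient function
      set s : ℂ := (k : ℂ) / N with hs_def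
      set s' : ℂ := ((k + 1 : ℕ) : ℂ) / N with hs'_def
      have hmem_s : ∀ z ∈ K, s * z ∈ K := fun z hz => hmem k hkN z hz
      have hmem_s' : ∀ z ∈ K, s' * z ∈ K := fun z hz => by
        simpa [hs'_def] using hmem (k + 1) (by push_cast at hk1 ⊢; linarith) z hz
      have hdist : ∀ z ∈ K, dist (s' * z) (s * z) < δ := by
        intro z hz
        rw [hK_def, mem_closedBall_zero_iff] at hz
        have : s' - s = 1 / (N : ℂ) := by
          rw [hs'_def, hs_def]
          push_cast; ring
        rw [Complex.dist_eq, ← sub_mul, this]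
        calc ‖1 / (N : ℂ) * z‖ = (1 / N) * ‖z‖ := by
              rw [norm_mul, norm_div]
              simp only [norm_one]
              rw [show ((N : ℂ)) = ((N : ℝ) : ℂ) by norm_cast, Complex.norm_real, Real.norm_eq_abs,
                abs_of_pos hNpos]
          _ ≤ (1 / N) * r := by
              apply mul_le_mul_of_nonneg_left hz
              positivity
          _ = r / N := by ring
          _ < δ := hrN
      have hlt : ∀ z ∈ K, ‖g (s' * z) - g (s * z)‖ < m := by
        intro z hz
        have := hδ' (s' * z) (hmem_s' z hz) (s * z) (hmem_s z hz) (hdist z hz)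
        rwa [Complex.dist_eq] at this
      have hden : ∀ z ∈ K, m ≤ ‖g (s * z)‖ := fun z hz => hmin _ (hmem_s z hz)
      have hden0 : ∀ z ∈ K, g (s * z) ≠ 0 := fun z hz => h0 _ (hmem_s z hz)
      set q : ℂ → ℂ := fun z => g (s' * z) / g (s * z) with hq_def
      have hq1 : ∀ z ∈ K, ‖q z - 1‖ < 1 := by
        intro z hz
        have hpos : 0 < ‖g (s * z)‖ := lt_of_lt_of_le hm (hden z hz)
        rw [hq_def]
        have : g (s' * z) / g (s * z) - 1 = (g (s' * z) - g (s * z)) / g (s * z) := by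
          rw [sub_div, div_self (hden0 z hz)]
        rw [this, norm_div, div_lt_one hpos]
        exact lt_of_lt_of_le (hlt z hz) (hden z hz)
      have hqslit : ∀ z ∈ K, q z ∈ Complex.slitPlane := by
        intro z hz
        have := Complex.mem_slitPlane_of_norm_lt_one (z := q z - 1) (by
          simpa using hq1 z hz)
        simpa using this
      have hq0 : ∀ z ∈ K, q z ≠ 0 := by
        intro z hz h
        have := hq1 z hz
        rw [h] at this
        simp at this
      refine ⟨fun z => L z + Complex.log (q z), ?_, ?_⟩
      · apply hLc.add
        apply ContinuousOn.clog
        · apply ContinuousOn.div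
          · exact hg.comp ((continuous_const.mul continuous_id).continuousOn) hmem_s'
          · exact hg.comp ((continuous_const.mul continuous_id).continuousOn) hmem_s
          · exact hden0
        · exact hqslit
      · intro z hz
        rw [Complex.exp_add, hLe z hz, Complex.exp_log (hq0 z hz), hq_def]
        exact mul_div_cancel₀ _ (hden0 z hz)
  obtain ⟨L, hLc, hLe⟩ := main N le_rfl
  refine ⟨L, hLc, fun z hz => ?_⟩
  have : ((N : ℂ) / N) = 1 := by
    apply div_self
    exact_mod_cast hNpos.ne'
  rw [hLe z hz, this, one_mul]

end NearRotAux

open NearRotAux Complex Metric Set in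
/-- a continuous map of a closed planar disk that is boundary-close to a
nontrivial rotation has a fixed point in the open disk. -/
theorem fixed_point_of_near_rotation (r : ℝ) (hr : 0 < r) (a : ℝ) (ha : a ∈ Set.Ioo 0 π)
    (F : EuclideanSpace ℝ (Fin 2) → EuclideanSpace ℝ (Fin 2))
    (hF : ContinuousOn F {p : EuclideanSpace ℝ (Fin 2) | ‖p‖ ≤ r})
    (hclose : ∀ p : EuclideanSpace ℝ (Fin 2), ‖p‖ = r → ‖F p - rot2 a p‖ < r * Real.sin a) :
    ∃ x : EuclideanSpace ℝ (Fin 2), ‖x‖ < r ∧ F x = x := by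
  by_contra hcon
  push_neg at hcon
  have hsin : 0 < Real.sin a := Real.sin_pos_of_pos_of_lt_pi ha.1 ha.2
  set c : ℂ := Complex.exp (a * Complex.I) - 1 with hc_def
  -- |c| > sin a
  have habs_c_sq : (‖c‖) ^ 2 = (Real.cos a - 1) ^ 2 + (Real.sin a) ^ 2 := by
    rw [Complex.sq_norm, Complex.normSq_apply, hc_def, Complex.exp_mul_I]
    simp [← Complex.ofReal_cos, ← Complex.ofReal_sin, sq]
  have hcos_ne : Real.cos a ≠ 1 := by
    intro h
    nlinarith [Real.sin_sq_add_cos_sq a]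
  have hsin_lt : Real.sin a < ‖c‖ := by
    apply lt_of_pow_lt_pow_left₀ 2 (norm_nonneg c)
    rw [habs_c_sq]
    have h2 : 0 < (Real.cos a - 1) ^ 2 := sq_pos_of_ne_zero (sub_ne_zero.mpr hcos_ne)
    nlinarith [Real.sin_sq_add_cos_sq a, h2]
  have hc0 : c ≠ 0 := by
    intro h
    rw [h] at hsin_lt
    simp at hsin_lt
    linarith
  -- complex version of F
  set Fc : ℂ → ℂ := fun z => toC (F (ofC z)) with hFc_def
  set g : ℂ → ℂ := fun z => Fc z - z with hg_def
  have hmapsTo : MapsTo ofC (closedBall (0 : ℂ) r) {p : EuclideanSpace ℝ (Fin 2) | ‖p‖ ≤ r} := by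
    intro z hz
    rw [mem_closedBall_zero_iff] at hz
    simpa [norm_ofC] using hz
  have hgc : ContinuousOn g (closedBall (0 : ℂ) r) := by
    apply ContinuousOn.sub ?_ continuousOn_id
    exact continuous_toC.comp_continuousOn
      (hF.comp continuous_ofC.continuousOn hmapsTo)
  -- boundary estimate
  have hbnd : ∀ z : ℂ, ‖z‖ = r → ‖g z - c * z‖ < r * Real.sin a := by
    intro z hz
    have hp : ‖ofC z‖ = r := by rw [norm_ofC]; exact hz
    have := hclose (ofC z) hp
    rw [← abs_toC, toC_sub, toC_rot2, toC_ofC] at this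
    have heq : g z - c * z = toC (F (ofC z)) - Complex.exp (a * Complex.I) * z := by
      rw [hg_def, hc_def, hFc_def]; ring_nf
    rw [heq]
    exact this
  -- nonvanishing
  have hne : ∀ z ∈ closedBall (0 : ℂ) r, g z ≠ 0 := by
    intro z hz hgz
    rw [mem_closedBall_zero_iff] at hz
    rcases lt_or_eq_of_le hz with h | h
    · -- interior: fixed point, contradiction with hcon
      have hFz : Fc z = z := by
        have := hgz
        rw [hg_def] at this
        simpa [sub_eq_zero] using this
      have : F (ofC z) = ofC z := by
        have h2 := congrArg ofC hFz
        rwa [hFc_def, ofC_toC] at h2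
      exact hcon (ofC z) (by rw [norm_ofC]; exact h) this
    · -- boundary: contradiction with estimate
      have habsz : ‖z‖ = r := by exact h
      have hb := hbnd z habsz
      rw [hgz, zero_sub, norm_neg, norm_mul, habsz] at hb
      have h2 : r * Real.sin a < r * ‖c‖ := (mul_lt_mul_iff_right₀ hr).mpr hsin_lt
      nlinarith [hb, h2]
  -- continuous logarithm
  obtain ⟨L, hLc, hLe⟩ := exists_log r hr.le g hgc hne
  -- the boundary circle
  set γ : ℝ → ℂ := fun θ => (r : ℂ) * Complex.exp (θ * Complex.I) with hγ_def
  have hγabs : ∀ θ, ‖γ θ‖ = r := by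
    intro θ
    rw [hγ_def]
    simp [Complex.norm_exp_ofReal_mul_I, abs_of_pos hr]
  have hγK : ∀ θ, γ θ ∈ closedBall (0 : ℂ) r := by
    intro θ
    rw [mem_closedBall_zero_iff]
    rw [hγabs]
  have hγ0 : ∀ θ, γ θ ≠ 0 := by
    intro θ h
    have := hγabs θ
    rw [h] at this
    simp at this
    linarith
  have hγcont : Continuous γ := by
    apply continuous_const.mul
    exact Complex.continuous_exp.comp (Complex.continuous_ofReal.mul continuous_const)
  -- the quotient on the circle
  set w : ℝ → ℂ := fun θ => g (γ θ) / (c * γ θ) with hw_def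
  have hcγ0 : ∀ θ, c * γ θ ≠ 0 := fun θ => mul_ne_zero hc0 (hγ0 θ)
  have hw1 : ∀ θ, ‖w θ - 1‖ < 1 := by
    intro θ
    have hb := hbnd (γ θ) (hγabs θ)
    have hpos : 0 < ‖c * γ θ‖ := by
      rw [norm_mul, hγabs]
      exact mul_pos (lt_trans hsin hsin_lt) hr
    rw [hw_def]
    have heq : g (γ θ) / (c * γ θ) - 1 = (g (γ θ) - c * γ θ) / (c * γ θ) := by
      rw [sub_div (g (γ θ)) (c * γ θ), div_self (hcγ0 θ)]
    rw [heq, norm_div, div_lt_one hpos]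
    calc ‖g (γ θ) - c * γ θ‖ < r * Real.sin a := hb
      _ < ‖c * γ θ‖ := by
          rw [norm_mul, hγabs]
          calc r * Real.sin a < r * ‖c‖ := by
                exact (mul_lt_mul_iff_right₀ hr).mpr hsin_lt
            _ = ‖c‖ * r := mul_comm _ _
  have hwslit : ∀ θ, w θ ∈ Complex.slitPlane := by
    intro θ
    have := Complex.mem_slitPlane_of_norm_lt_one (z := w θ - 1) (by
      simpa using hw1 θ)
    simpa using this
  have hw0 : ∀ θ, w θ ≠ 0 := by
    intro θ h
    have := hw1 θ
    rw [h] at this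
    simp at this
  -- the function ψ
  set ψ : ℝ → ℂ := fun θ => L (γ θ) - Complex.log (w θ) - θ * Complex.I with hψ_def
  have hgγeq : ∀ θ, g (γ θ) = w θ * (c * γ θ) := by
    intro θ
    simp only [hw_def]
    exact (div_mul_cancel₀ _ (hcγ0 θ)).symm
  have hψexp : ∀ θ, Complex.exp (ψ θ) = c * r := by
    intro θ
    simp only [hψ_def]
    rw [Complex.exp_sub, Complex.exp_sub, hLe (γ θ) (hγK θ), Complex.exp_log (hw0 θ),
      hgγeq θ]
    simp only [hγ_def]
    field_simp
    exact mul_div_cancel_left₀ _ (hw0 θ)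
  -- periodicity
  have hγper : γ (2 * π) = γ 0 := by
    have h1 : ((2 * π : ℝ) : ℂ) * Complex.I = 2 * (π : ℂ) * Complex.I := by push_cast; ring
    simp only [hγ_def, h1, Complex.exp_two_pi_mul_I, Complex.ofReal_zero, zero_mul,
      Complex.exp_zero]
  have hwper : w (2 * π) = w 0 := by simp only [hw_def, hγper]
  have hψper : ψ (2 * π) = ψ 0 - (2 * π) * Complex.I := by
    simp only [hψ_def, hγper, hwper]
    push_cast
    ring
  -- ψ θ - ψ 0 is an integer multiple of 2πi
  have hint : ∀ θ : ℝ, ∃ n : ℤ, ψ θ - ψ 0 = n * (2 * π * Complex.I) := by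
    intro θ
    rw [← Complex.exp_eq_one_iff, Complex.exp_sub, hψexp, hψexp, div_self]
    exact mul_ne_zero hc0 (by exact_mod_cast hr.ne')
  -- continuity of ψ on [0, 2π]
  have hψcont : ContinuousOn ψ (Icc 0 (2 * π)) := by
    have hLγ : ContinuousOn (fun θ => L (γ θ)) (Icc 0 (2 * π)) :=
      hLc.comp hγcont.continuousOn (fun θ _ => hγK θ)
    have hgγ : ContinuousOn (fun θ => g (γ θ)) (Icc 0 (2 * π)) :=
      hgc.comp hγcont.continuousOn (fun θ _ => hγK θ)
    have hwcont : ContinuousOn w (Icc 0 (2 * π)) := by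
      apply hgγ.div
      · exact (continuous_const.mul hγcont).continuousOn
      · exact fun θ _ => hcγ0 θ
    have hlogw : ContinuousOn (fun θ => Complex.log (w θ)) (Icc 0 (2 * π)) :=
      hwcont.clog (fun θ _ => hwslit θ)
    apply (hLγ.sub hlogw).sub
    exact (Complex.continuous_ofReal.mul continuous_const).continuousOn
  -- intermediate value argument on the imaginary part
  set ν : ℝ → ℝ := fun θ => (ψ θ).im with hν_def
  have hνcont : ContinuousOn ν (Icc 0 (2 * π)) :=
    Complex.continuous_im.comp_continuousOn hψcont
  have hν2π : ν (2 * π) = ν 0 - 2 * π := by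
    rw [hν_def]
    simp only [hψper]
    simp
  have hmem : ν 0 - π ∈ Icc (ν (2 * π)) (ν 0) := by
    rw [hν2π]
    constructor <;> [linarith [Real.pi_pos]; linarith [Real.pi_pos]]
  have hIVT := intermediate_value_Icc' (by positivity : (0:ℝ) ≤ 2 * π) hνcont
  obtain ⟨θ, hθmem, hθval⟩ := hIVT hmem
  obtain ⟨n, hn⟩ := hint θ
  have him : ν θ - ν 0 = n * (2 * π) := by
    have := congrArg Complex.im hn
    simpa [hν_def] using this
  rw [hθval] at him
  have h2n : (2 * n : ℝ) = -1 := by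
    have hπ : (π : ℝ) ≠ 0 := Real.pi_ne_zero
    field_simp at him
    nlinarith [him, Real.pi_pos]
  have : (2 * n : ℤ) = -1 := by exact_mod_cast h2n
  omega
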